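/- For every unit vector n ∈ ℝ³, every k, j ∈ {1,2,3}, and every Q ≠ P, the directional derivative of Q ↦ H_{kj}(Q,P) in the direction n is bounded in absolute value by 3/(16πμ²); that is, the normal derivative of H remains bounded (merely discontinuous) as Q → P. -/

import Mathlib

open Real

lemma hasFDerivAt_norm_aux {E : Type*} [NormedAddCommGroup E] [InnerProductSpace ℝ E]
    {x : E} (hx : x ≠ 0) :
    HasFDerivAt (fun y : E => ‖y‖) (‖x‖⁻¹ • innerSL ℝ x) x := by
  have hsq : HasFDerivAt (fun y : E => ‖y‖ ^ 2) (2 • innerSL ℝ x) x :=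
    (hasStrictFDerivAt_norm_sq x).hasFDerivAt
  have hne : (‖x‖ : ℝ) ^ 2 ≠ 0 := by
    have : ‖x‖ ≠ 0 := norm_ne_zero_iff.2 hx
    positivity
  have h := (Real.hasDerivAt_sqrt hne).comp_hasFDerivAt x hsq
  have heq : (fun y : E => ‖y‖) = fun y : E => √(‖y‖ ^ 2) := by
    ext y; rw [Real.sqrt_sq (norm_nonneg _)]
  rw [heq]
  refine h.congr_fderiv ?_
  have hx0 : ‖x‖ ≠ 0 := norm_ne_zero_iff.2 hx
  rw [Real.sqrt_sq (norm_nonneg x), two_nsmul, ← two_smul ℝ, smul_smul]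
  congr 1
  field_simp

lemma abs_coord_le (x : EuclideanSpace ℝ (Fin 3)) (i : Fin 3) : |x i| ≤ ‖x‖ := by
  rw [EuclideanSpace.norm_eq]
  have h : ‖x i‖ ^ 2 ≤ ∑ l, ‖x l‖ ^ 2 :=
    Finset.single_le_sum (f := fun l => ‖x l‖ ^ 2) (fun l _ => by positivity) (Finset.mem_univ i)
  calc |x i| = √(‖x i‖ ^ 2) := by rw [Real.sqrt_sq (norm_nonneg _), Real.norm_eq_abs]
    _ ≤ _ := Real.sqrt_le_sqrt h


lemma deriv_bound_aux (r a Rk Rj nk nj d : ℝ) (hr : 0 < r) (ha : |a| ≤ r)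
    (hRk : |Rk| ≤ r) (hRj : |Rj| ≤ r) (hnk : |nk| ≤ 1) (hnj : |nj| ≤ 1) (hd : |d| ≤ 1) :
    |d * (3 * (r⁻¹ * a)) - (Rk * Rj * (-(r ^ 2)⁻¹ * (r⁻¹ * a)) + r⁻¹ * (Rk * nj + Rj * nk))|
      ≤ 6 := by
  have hia : r⁻¹ * |a| ≤ 1 := by
    have := mul_le_mul_of_nonneg_left ha (inv_nonneg.2 hr.le)
    rwa [inv_mul_cancel₀ hr.ne'] at this
  have h1 : |d * (3 * (r⁻¹ * a))| ≤ 3 := by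
    rw [abs_mul, abs_mul, abs_mul, abs_inv, abs_of_pos hr,
      abs_of_nonneg (by norm_num : (0:ℝ) ≤ 3)]
    nlinarith [abs_nonneg d, abs_nonneg a, mul_nonneg (inv_nonneg.2 hr.le) (abs_nonneg a)]
  have h2 : |Rk * Rj * (-(r ^ 2)⁻¹ * (r⁻¹ * a))| ≤ 1 := by
    simp only [abs_mul, abs_neg, abs_inv, abs_of_pos hr, abs_of_pos (pow_pos hr 2)]
    calc |Rk| * |Rj| * ((r ^ 2)⁻¹ * (r⁻¹ * |a|))
        ≤ r * r * ((r ^ 2)⁻¹ * (r⁻¹ * r)) := by gcongr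
      _ = 1 := by field_simp
  have h3 : |r⁻¹ * (Rk * nj + Rj * nk)| ≤ 2 := by
    rw [abs_mul, abs_inv, abs_of_pos hr]
    have hsum : |Rk * nj + Rj * nk| ≤ 2 * r := by
      calc |Rk * nj + Rj * nk| ≤ |Rk * nj| + |Rj * nk| := abs_add_le _ _
        _ = |Rk| * |nj| + |Rj| * |nk| := by rw [abs_mul, abs_mul]
        _ ≤ r * 1 + r * 1 := by gcongr
        _ = 2 * r := by ring
    calc r⁻¹ * |Rk * nj + Rj * nk| ≤ r⁻¹ * (2 * r) := by gcongr
      _ = 2 := by field_simp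
  calc |d * (3 * (r⁻¹ * a)) - (Rk * Rj * (-(r ^ 2)⁻¹ * (r⁻¹ * a)) + r⁻¹ * (Rk * nj + Rj * nk))|
      ≤ |d * (3 * (r⁻¹ * a))|
        + |Rk * Rj * (-(r ^ 2)⁻¹ * (r⁻¹ * a)) + r⁻¹ * (Rk * nj + Rj * nk)| := abs_sub _ _
    _ ≤ |d * (3 * (r⁻¹ * a))|
        + (|Rk * Rj * (-(r ^ 2)⁻¹ * (r⁻¹ * a))| + |r⁻¹ * (Rk * nj + Rj * nk)|) :=
          add_le_add_right (abs_add_le _ _) _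
    _ ≤ 3 + (1 + 2) := add_le_add h1 (add_le_add h2 h3)
    _ = 6 := by norm_num

/-- The directional derivative of H_{kj}(·,P) along any unit vector n is bounded in
absolute value by 3/(16πμ²), for every Q ≠ P. -/
theorem H_directional_derivative_bounded
    (μ : ℝ) (hμ : 0 < μ) (P : EuclideanSpace ℝ (Fin 3))
    (n : EuclideanSpace ℝ (Fin 3)) (hn : ‖n‖ = 1)
    (k j : Fin 3) (Q : EuclideanSpace ℝ (Fin 3)) (hQ : Q ≠ P) :
    |fderiv ℝ (fun Q'' =>
        (1 / (32 * π * μ ^ 2)) *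
          (3 * ‖Q'' - P‖ * (if k = j then (1 : ℝ) else 0) -
            (Q'' - P) k * (Q'' - P) j / ‖Q'' - P‖)) Q n| ≤ 3 / (16 * π * μ ^ 2) := by
  have hR0 : Q - P ≠ 0 := sub_ne_zero.2 hQ
  have hr0 : ‖Q - P‖ ≠ 0 := norm_ne_zero_iff.2 hR0
  have hrpos : 0 < ‖Q - P‖ := norm_pos_iff.2 hR0
  have hR : HasFDerivAt (fun Q'' : EuclideanSpace ℝ (Fin 3) => Q'' - P)
      (ContinuousLinearMap.id ℝ (EuclideanSpace ℝ (Fin 3))) Q := (hasFDerivAt_id Q).sub_const P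
  have hnorm : HasFDerivAt (fun Q'' : EuclideanSpace ℝ (Fin 3) => ‖Q'' - P‖)
      ((‖Q - P‖⁻¹ • innerSL ℝ (Q - P)).comp
        (ContinuousLinearMap.id ℝ (EuclideanSpace ℝ (Fin 3)))) Q :=
    (hasFDerivAt_norm_aux hR0).comp Q hR
  have hk : HasFDerivAt (fun Q'' : EuclideanSpace ℝ (Fin 3) => (Q'' - P) k)
      ((EuclideanSpace.proj k).comp (ContinuousLinearMap.id ℝ (EuclideanSpace ℝ (Fin 3)))) Q := by
    have h := (EuclideanSpace.proj (𝕜 := ℝ) k).hasFDerivAt.comp Q hR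
    exact h
  have hj : HasFDerivAt (fun Q'' : EuclideanSpace ℝ (Fin 3) => (Q'' - P) j)
      ((EuclideanSpace.proj j).comp (ContinuousLinearMap.id ℝ (EuclideanSpace ℝ (Fin 3)))) Q := by
    have h := (EuclideanSpace.proj (𝕜 := ℝ) j).hasFDerivAt.comp Q hR
    exact h
  have hinv : HasFDerivAt (fun Q'' : EuclideanSpace ℝ (Fin 3) => ‖Q'' - P‖⁻¹)
      ((-(‖Q - P‖ ^ 2)⁻¹) • ((‖Q - P‖⁻¹ • innerSL ℝ (Q - P)).comp
        (ContinuousLinearMap.id ℝ (EuclideanSpace ℝ (Fin 3))))) Q :=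
    (hasDerivAt_inv hr0).comp_hasFDerivAt Q hnorm
  have hmain := ((((hnorm.const_mul (3:ℝ)).mul_const
      (if k = j then (1:ℝ) else 0)).sub ((hk.mul hj).mul hinv)).const_mul
      (1 / (32 * π * μ ^ 2)))
  have heq : (fun Q'' : EuclideanSpace ℝ (Fin 3) =>
      (1 / (32 * π * μ ^ 2)) *
        (3 * ‖Q'' - P‖ * (if k = j then (1 : ℝ) else 0) -
          (Q'' - P) k * (Q'' - P) j / ‖Q'' - P‖)) =ᶠ[nhds Q]
      (fun Q'' : EuclideanSpace ℝ (Fin 3) =>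
      (1 / (32 * π * μ ^ 2)) *
        (3 * ‖Q'' - P‖ * (if k = j then (1 : ℝ) else 0) -
          (Q'' - P) k * (Q'' - P) j * ‖Q'' - P‖⁻¹)) :=
    Filter.Eventually.of_forall (fun y => by simp only [div_eq_mul_inv])
  rw [(hmain.congr_of_eventuallyEq heq).fderiv]
  simp only [ContinuousLinearMap.smul_apply, ContinuousLinearMap.sub_apply,
    ContinuousLinearMap.add_apply, ContinuousLinearMap.comp_apply,
    ContinuousLinearMap.coe_id', id_eq, innerSL_apply_apply, smul_eq_mul,
    PiLp.proj_apply]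
  have habs_a : |(inner ℝ (Q - P) n : ℝ)| ≤ ‖Q - P‖ := by
    simpa [hn] using abs_real_inner_le_norm (Q - P) n
  have hd : |if k = j then (1:ℝ) else 0| ≤ 1 := by split_ifs <;> norm_num
  have hbound := deriv_bound_aux (‖Q - P‖) (inner ℝ (Q - P) n) ((Q - P) k) ((Q - P) j)
    (n k) (n j) (if k = j then (1:ℝ) else 0) hrpos habs_a
    (abs_coord_le (Q - P) k) (abs_coord_le (Q - P) j)
    (hn ▸ abs_coord_le n k) (hn ▸ abs_coord_le n j) hd
  have hc : 0 < 1 / (32 * π * μ ^ 2) := by positivity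
  rw [abs_mul, abs_of_pos hc]
  calc 1 / (32 * π * μ ^ 2) * |_| ≤ 1 / (32 * π * μ ^ 2) * 6 :=
        mul_le_mul_of_nonneg_left hbound hc.le
    _ = 3 / (16 * π * μ ^ 2) := by
        field_simp
        ring
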